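/- The Price of Anarchy of the n-user selfish routing game on the load-balancing network with uniform cross-link splitting is arbitrarily large: for every integer n ≥ 2, every r > 0, L > 0 and every M > 0, there exist δ, c with 0 < δ < L < c and cδ < rL such that the game has a Nash equilibrium p ∈ [0, r]ⁿ (each user i's strategy pᵢ minimizes Jᵢ given the others' strategies) with Σᵢ Jᵢ(p) > M · n·r·L, where n·r·L is the socially optimal total cost. -/

import Mathlib

open Finset

/-- Elbow latency function with parameters `r, L, δ`. -/
noncomputable def T (r L δ x : ℝ) : ℝ := max 0 (L / δ * (x - r) + L)

/-- Total flow on local link `j` under profile `p` (uniform cross-link splitting). -/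
noncomputable def flow (n : ℕ) (r : ℝ) (p : Fin n → ℝ) (j : Fin n) : ℝ :=
  p j + ∑ i ∈ Finset.univ.erase j, (r - p i) / ((n : ℝ) - 1)

/-- Cost of user `i` in the `n`-user load-balancing game with uniform cross-link splitting. -/
noncomputable def J (n : ℕ) (r L δ c : ℝ) (p : Fin n → ℝ) (i : Fin n) : ℝ :=
  p i * T r L δ (flow n r p i) +
    ∑ j ∈ Finset.univ.erase i, (r - p i) / ((n : ℝ) - 1) * (c + T r L δ (flow n r p j))

/-- Key scalar inequality: the symmetric point is a best response. -/
lemma key_ineq (k u c L r a y : ℝ) (hk : 0 < k) (hu : 0 < u)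
    (hy0 : 0 ≤ y) (hyr : y ≤ r)
    (hc : c * k = u * ((k + 1) * a - r)) :
    a * L + (r - a) * (c + L) ≤
      y * max 0 (u * (y - a) + L) + (r - y) * (c + max 0 (u * (a - y) / k + L)) := by
  have h1 : y * (u * (y - a) + L) ≤ y * max 0 (u * (y - a) + L) :=
    mul_le_mul_of_nonneg_left (le_max_right _ _) hy0
  have h2 : (r - y) * (c + (u * (a - y) / k + L)) ≤
      (r - y) * (c + max 0 (u * (a - y) / k + L)) :=
    mul_le_mul_of_nonneg_left (by linarith [le_max_right (0:ℝ) (u * (a - y) / k + L)])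
      (by linarith)
  have main : a * L + (r - a) * (c + L) ≤
      y * (u * (y - a) + L) + (r - y) * (c + (u * (a - y) / k + L)) := by
    rw [← sub_nonneg]
    have hid : k * ((y * (u * (y - a) + L) + (r - y) * (c + (u * (a - y) / k + L))) -
        (a * L + (r - a) * (c + L))) = u * (k + 1) * (y - a) ^ 2 := by
      field_simp
      linear_combination (a - y) * hc
    nlinarith [hid, mul_nonneg (mul_nonneg hu.le (by linarith : (0:ℝ) ≤ k + 1)) (sq_nonneg (y - a)), hk]
  linarith

lemma sum_erase_const {n : ℕ} (hn : 1 ≤ n) (i : Fin n) (x : ℝ) :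
    ∑ _j ∈ Finset.univ.erase i, x = ((n : ℝ) - 1) * x := by
  rw [Finset.sum_const, Finset.card_erase_of_mem (Finset.mem_univ i), Finset.card_univ,
    Fintype.card_fin, nsmul_eq_mul, Nat.cast_sub hn, Nat.cast_one]

lemma flow_const {n : ℕ} (hn : 2 ≤ n) (r a : ℝ) (j : Fin n) :
    flow n r (fun _ => a) j = r := by
  have hk : ((n : ℝ) - 1) ≠ 0 := by
    have : (2 : ℝ) ≤ (n : ℝ) := by exact_mod_cast hn
    linarith
  simp only [flow]
  rw [sum_erase_const (by omega) j ((r - a) / ((n : ℝ) - 1)),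
    mul_div_cancel₀ _ hk]
  ring

lemma flow_update_self {n : ℕ} (hn : 2 ≤ n) (r a y : ℝ) (i : Fin n) :
    flow n r (Function.update (fun _ => a) i y) i = y + (r - a) := by
  have hk : ((n : ℝ) - 1) ≠ 0 := by
    have : (2 : ℝ) ≤ (n : ℝ) := by exact_mod_cast hn
    linarith
  simp only [flow, Function.update_self]
  rw [Finset.sum_congr rfl (fun j hj => by
    rw [Function.update_of_ne (Finset.ne_of_mem_erase hj)]),
    sum_erase_const (by omega) i ((r - a) / ((n : ℝ) - 1)), mul_div_cancel₀ _ hk]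

lemma flow_update_other {n : ℕ} (hn : 2 ≤ n) (r a y : ℝ) (i j : Fin n) (hij : j ≠ i) :
    flow n r (Function.update (fun _ => a) i y) j = r + (a - y) / ((n : ℝ) - 1) := by
  have hN : (2 : ℝ) ≤ (n : ℝ) := by exact_mod_cast hn
  have hk : ((n : ℝ) - 1) ≠ 0 := by linarith
  have hi : i ∈ Finset.univ.erase j := Finset.mem_erase.2 ⟨Ne.symm hij, Finset.mem_univ i⟩
  simp only [flow, Function.update_of_ne hij]
  rw [← Finset.add_sum_erase _ _ hi, Function.update_self,
    Finset.sum_congr rfl (fun m hm => by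
      rw [Function.update_of_ne (Finset.ne_of_mem_erase hm)])]
  rw [Finset.sum_const, Finset.card_erase_of_mem hi,
    Finset.card_erase_of_mem (Finset.mem_univ j), Finset.card_univ, Fintype.card_fin,
    nsmul_eq_mul]
  have hcast : ((n - 1 - 1 : ℕ) : ℝ) = (n : ℝ) - 2 := by
    have h2 : ((2:ℕ) : ℝ) ≤ (n : ℝ) := by exact_mod_cast hn
    rw [Nat.sub_sub, Nat.cast_sub hn]
    norm_num
  rw [hcast]
  field_simp
  ring

lemma J_const {n : ℕ} (hn : 2 ≤ n) (r L δ c a : ℝ) (hL : 0 ≤ L) (i : Fin n) :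
    J n r L δ c (fun _ => a) i = a * L + (r - a) * (c + L) := by
  have hk : ((n : ℝ) - 1) ≠ 0 := by
    have : (2 : ℝ) ≤ (n : ℝ) := by exact_mod_cast hn
    linarith
  have hT : T r L δ r = L := by simp [T, hL]
  simp only [J, flow_const hn, hT]
  rw [sum_erase_const (by omega) i ((r - a) / ((n : ℝ) - 1) * (c + L))]
  field_simp

lemma J_update {n : ℕ} (hn : 2 ≤ n) (r L δ c a y : ℝ) (i : Fin n) :
    J n r L δ c (Function.update (fun _ => a) i y) i =
      y * T r L δ (y + (r - a)) +
        (r - y) * (c + T r L δ (r + (a - y) / ((n : ℝ) - 1))) := by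
  have hk : ((n : ℝ) - 1) ≠ 0 := by
    have : (2 : ℝ) ≤ (n : ℝ) := by exact_mod_cast hn
    linarith
  simp only [J, Function.update_self, flow_update_self hn]
  rw [Finset.sum_congr rfl (fun j hj => by
    rw [flow_update_other hn r a y i j (Finset.ne_of_mem_erase hj)]),
    sum_erase_const (by omega) i]
  field_simp

theorem n_user_price_of_anarchy_unbounded
    (n : ℕ) (hn : 2 ≤ n) (r L : ℝ) (hr : 0 < r) (hL : 0 < L) (M : ℝ) (hM : 0 < M) :
    ∃ δ c : ℝ, 0 < δ ∧ δ < L ∧ L < c ∧ c * δ < r * L ∧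
      ∃ p : Fin n → ℝ, (∀ i, p i ∈ Set.Icc (0 : ℝ) r) ∧
        -- p is a Nash equilibrium of the selfish game
        (∀ i : Fin n, ∀ y ∈ Set.Icc (0 : ℝ) r,
          J n r L δ c p i ≤ J n r L δ c (Function.update p i y) i) ∧
        (∑ i, J n r L δ c p i) > M * ((n : ℝ) * r * L) := by
  have hN2 : (2 : ℝ) ≤ (n : ℝ) := by exact_mod_cast hn
  set N := (n : ℝ) with hN
  have hN0 : 0 < N := by linarith
  have hk0 : 0 < N - 1 := by linarith
  set c := L + r + 2 * M * N * L with hc_def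
  have hc_pos : 0 < c := by positivity
  set δ := r * L / (2 * c) with hδ_def
  have hδ_pos : 0 < δ := by positivity
  set a := r * (N + 1) / (2 * N) with ha_def
  have ha0 : 0 ≤ a := by positivity
  have har : a ≤ r := by
    rw [ha_def, div_le_iff₀ (by linarith)]
    nlinarith
  have hu_pos : 0 < L / δ := by positivity
  have hcδ : c * δ = r * L / 2 := by
    rw [hδ_def]; field_simp
  have hFOC : c * (N - 1) = (L / δ) * (((N - 1) + 1) * a - r) := by
    rw [hδ_def, ha_def]
    field_simp
    ring
  refine ⟨δ, c, hδ_pos, ?_, ?_, ?_, fun _ => a, fun i => ⟨ha0, har⟩, ?_, ?_⟩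
  · rw [hδ_def, div_lt_iff₀ (by positivity)]
    have h2c : r < 2 * c := by rw [hc_def]; nlinarith [mul_pos (mul_pos hM hN0) hL]
    nlinarith [mul_lt_mul_of_pos_left h2c hL]
  · rw [hc_def]; nlinarith [mul_pos (mul_pos hM hN0) hL]
  · rw [hcδ]; nlinarith [mul_pos hr hL]
  · intro i y hy
    rw [J_const hn r L δ c a hL.le i, J_update hn r L δ c a y i]
    have hT1 : T r L δ (y + (r - a)) = max 0 (L / δ * (y - a) + L) := by
      simp only [T]
      rw [show L / δ * (y + (r - a) - r) + L = L / δ * (y - a) + L by ring]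
    have hT2 : T r L δ (r + (a - y) / (N - 1)) =
        max 0 (L / δ * (a - y) / (N - 1) + L) := by
      simp only [T]
      rw [show L / δ * (r + (a - y) / (N - 1) - r) + L
          = L / δ * (a - y) / (N - 1) + L by ring]
    rw [hT1, hT2]
    exact key_ineq (N - 1) (L / δ) c L r a y hk0 hu_pos hy.1 hy.2 hFOC
  · have hsum : ∑ i, J n r L δ c (fun _ => a) i = N * (a * L + (r - a) * (c + L)) := by
      rw [Finset.sum_congr rfl (fun i _ => J_const hn r L δ c a hL.le i),
        Finset.sum_const, Finset.card_univ, Fintype.card_fin, nsmul_eq_mul]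
    rw [hsum]
    have e1 : N * a = r * (N + 1) / 2 := by rw [ha_def]; field_simp
    have e2 : N * (r - a) = r * (N - 1) / 2 := by rw [ha_def]; field_simp; ring
    have expand : N * (a * L + (r - a) * (c + L)) = (N * a) * L + (N * (r - a)) * (c + L) := by
      ring
    rw [gt_iff_lt, ← sub_pos, expand, e1, e2, hc_def]
    nlinarith [mul_pos hr hL, mul_pos (mul_pos hM hN0) (mul_pos hr hL), sq_nonneg (N - 1),
      mul_nonneg (mul_nonneg (mul_nonneg hM.le hN0.le) (mul_pos hr hL).le)
        (by linarith : (0:ℝ) ≤ N - 2), mul_pos hr hr]
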